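/- At every point of W^{ijk}, writing a = cosh l_jk, b = cosh l_ki, c = cosh l_ij, the Jacobian matrix ∂(θ^i_jk, θ^j_ki, θ^k_ij)/∂(w_i,w_j,w_k) equals the scalar −2/(sinh θ^k_ij · sinh l_ki · sinh l_jk) times the symmetric matrix M(a,b,c) whose entries are M₁₁ = (c+ab)/(b−1) + (b+ac)/(c−1), M₁₂ = M₂₁ = (a+b−c+1)/(c−1), M₁₃ = M₃₁ = (a+c−b+1)/(b−1), M₂₂ = (c+ab)/(a−1) + (a+bc)/(c−1), M₂₃ = M₃₂ = (b+c−a+1)/(a−1), M₃₃ = (b+ac)/(a−1) + (a+bc)/(b−1). -/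

import Mathlib

open Real Filter Set

/-- Inverse hyperbolic cosine. -/
noncomputable def arcosh (x : ℝ) : ℝ := Real.log (x + Real.sqrt (x ^ 2 - 1))

/-- The length of the side of a right-angled hyperbolic hexagon opposite the side of
length `x`, where the three pairwise non-adjacent sides have lengths `x, y, z`. -/
noncomputable def theta (x y z : ℝ) : ℝ :=
  _root_.arcosh ((Real.cosh x + Real.cosh y * Real.cosh z) / (Real.sinh y * Real.sinh z))

/-- The conformally deformed edge length `l` with `cosh (l/2) = e^s · cosh (c/2)`,
where `c` is the original edge length and `s` is the sum of the two conformal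
factors at the ends of the edge. -/
noncomputable def hexLen (c s : ℝ) : ℝ := 2 * _root_.arcosh (Real.exp s * Real.cosh (c / 2))

/-- The space `W^{ijk}` of conformal factors `p = (w_i, w_j, w_k)` for which the three
deformed edge lengths `l_jk, l_ki, l_ij` are defined and positive; here
`a = l⁰_jk`, `b = l⁰_ki`, `c = l⁰_ij`. -/
def Wijk (a b c : ℝ) : Set (ℝ × ℝ × ℝ) :=
  {p | 1 < Real.exp (p.2.1 + p.2.2) * Real.cosh (a / 2) ∧
       1 < Real.exp (p.2.2 + p.1) * Real.cosh (b / 2) ∧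
       1 < Real.exp (p.1 + p.2.1) * Real.cosh (c / 2)}

/-- `θ^i_jk` as a function of `p = (w_i, w_j, w_k)`, where `a = l⁰_jk`, `b = l⁰_ki`,
`c = l⁰_ij`: the boundary arc opposite the deformed edge `l_jk`. -/
noncomputable def thetaI (a b c : ℝ) (p : ℝ × ℝ × ℝ) : ℝ :=
  theta (hexLen a (p.2.1 + p.2.2)) (hexLen b (p.2.2 + p.1)) (hexLen c (p.1 + p.2.1))

/-- `θ^j_ki` as a function of `p = (w_i, w_j, w_k)`. -/
noncomputable def thetaJ (a b c : ℝ) (p : ℝ × ℝ × ℝ) : ℝ :=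
  theta (hexLen b (p.2.2 + p.1)) (hexLen c (p.1 + p.2.1)) (hexLen a (p.2.1 + p.2.2))

/-- `θ^k_ij` as a function of `p = (w_i, w_j, w_k)`. -/
noncomputable def thetaK (a b c : ℝ) (p : ℝ × ℝ × ℝ) : ℝ :=
  theta (hexLen c (p.1 + p.2.1)) (hexLen a (p.2.1 + p.2.2)) (hexLen b (p.2.2 + p.1))

/-- The Jacobian matrix `∂(θ^i_jk, θ^j_ki, θ^k_ij)/∂(w_i, w_j, w_k)` at `p`. -/
noncomputable def Jac (a b c : ℝ) (p : ℝ × ℝ × ℝ) : Matrix (Fin 3) (Fin 3) ℝ :=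
  fun r s =>
    fderiv ℝ (![thetaI a b c, thetaJ a b c, thetaK a b c] r) p
      (![((1:ℝ),(0:ℝ),(0:ℝ)), ((0:ℝ),(1:ℝ),(0:ℝ)), ((0:ℝ),(0:ℝ),(1:ℝ))] s)

/-- The symmetric matrix `M(a,b,c)` from the proof of Lemma 2.3, with
`a = cosh l_jk`, `b = cosh l_ki`, `c = cosh l_ij`. -/
noncomputable def Mmat (a b c : ℝ) : Matrix (Fin 3) (Fin 3) ℝ :=
  !![(c + a * b) / (b - 1) + (b + a * c) / (c - 1),
       (a + b - c + 1) / (c - 1), (a + c - b + 1) / (b - 1);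
     (a + b - c + 1) / (c - 1),
       (c + a * b) / (a - 1) + (a + b * c) / (c - 1), (b + c - a + 1) / (a - 1);
     (a + c - b + 1) / (b - 1), (b + c - a + 1) / (a - 1),
       (b + a * c) / (a - 1) + (a + b * c) / (b - 1)]

/-! ### Auxiliary definitions and lemmas -/

noncomputable def ddd (x y z : ℝ) : ℝ := x^2 + y^2 + z^2 + 2*x*y*z - 1

noncomputable def Af (t s : ℝ) : ℝ := 2*(Real.exp s * Real.cosh (t/2))^2 - 1

lemma one_lt_Af {t s : ℝ} (h : 1 < Real.exp s * Real.cosh (t/2)) : 1 < Af t s := by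
  unfold Af; nlinarith

lemma arcosh_aux {x : ℝ} (hx : 1 ≤ x) :
    Real.exp (_root_.arcosh x) = x + Real.sqrt (x^2-1) ∧
    Real.exp (-(_root_.arcosh x)) = x - Real.sqrt (x^2-1) := by
  have h1 : (0:ℝ) ≤ x^2-1 := by nlinarith
  have hs2 : Real.sqrt (x^2-1)^2 = x^2-1 := Real.sq_sqrt h1
  have hsn : 0 ≤ Real.sqrt (x^2-1) := Real.sqrt_nonneg _
  have ht : 0 < x + Real.sqrt (x^2-1) := by nlinarith
  have he : Real.exp (_root_.arcosh x) = x + Real.sqrt (x^2-1) := Real.exp_log ht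
  refine ⟨he, ?_⟩
  rw [Real.exp_neg, he]
  exact inv_eq_of_mul_eq_one_right (by nlinarith)

lemma cosh_arcosh {x : ℝ} (hx : 1 ≤ x) : Real.cosh (_root_.arcosh x) = x := by
  rw [Real.cosh_eq, (arcosh_aux hx).1, (arcosh_aux hx).2]; ring

lemma sinh_arcosh {x : ℝ} (hx : 1 ≤ x) : Real.sinh (_root_.arcosh x) = Real.sqrt (x^2-1) := by
  rw [Real.sinh_eq, (arcosh_aux hx).1, (arcosh_aux hx).2]; ring

lemma hasDerivAt_arcosh {x : ℝ} (hx : 1 < x) :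
    HasDerivAt _root_.arcosh (Real.sqrt (x^2-1))⁻¹ x := by
  have h1 : (0:ℝ) < x^2 - 1 := by nlinarith
  have hs0 : 0 < Real.sqrt (x^2-1) := Real.sqrt_pos.2 h1
  have hs : Real.sqrt (x^2-1)^2 = x^2-1 := Real.sq_sqrt h1.le
  have ht : 0 < x + Real.sqrt (x^2-1) := by positivity
  have hin : HasDerivAt (fun y : ℝ => y^2 - 1) (2*x) x := by
    simpa using ((hasDerivAt_id x).pow 2).sub_const 1
  have hsq := hin.sqrt h1.ne'
  have hsum := (hasDerivAt_id x).fun_add hsq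
  have hlog := hsum.log ht.ne'
  have harc : _root_.arcosh = fun y => Real.log (y + Real.sqrt (y^2-1)) := rfl
  rw [harc]
  refine hlog.congr_deriv (Eq.symm ?_)
  simp only [id]
  field_simp
  nlinarith [hs]

lemma cosh_hexLen {t s : ℝ} (h : 1 ≤ Real.exp s * Real.cosh (t/2)) :
    Real.cosh (hexLen t s) = Af t s := by
  rw [hexLen, Real.cosh_two_mul, Real.sinh_sq, _root_.cosh_arcosh h, Af]; ring

lemma sinh_hexLen {t s : ℝ} (h : 1 ≤ Real.exp s * Real.cosh (t/2)) :
    Real.sinh (hexLen t s) = Real.sqrt ((Af t s)^2 - 1) := by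
  have h0 : (0:ℝ) < Real.exp s * Real.cosh (t/2) := lt_of_lt_of_le one_pos h
  rw [hexLen, Real.sinh_two_mul, _root_.cosh_arcosh h, _root_.sinh_arcosh h]
  have h2 : (Af t s)^2 - 1 = (2*(Real.exp s * Real.cosh (t/2)))^2 * ((Real.exp s * Real.cosh (t/2))^2-1) := by
    rw [Af]; ring
  rw [h2, Real.sqrt_mul (by positivity), Real.sqrt_sq (by positivity)]
  ring

lemma theta_hex {x y z sx sy sz : ℝ} (hx : 1 ≤ Real.exp sx * Real.cosh (x/2))
    (hy : 1 ≤ Real.exp sy * Real.cosh (y/2)) (hz : 1 ≤ Real.exp sz * Real.cosh (z/2)) :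
    theta (hexLen x sx) (hexLen y sy) (hexLen z sz)
      = _root_.arcosh ((Af x sx + Af y sy * Af z sz) /
          (Real.sqrt ((Af y sy)^2-1) * Real.sqrt ((Af z sz)^2-1))) := by
  rw [theta, cosh_hexLen hx, cosh_hexLen hy, cosh_hexLen hz, sinh_hexLen hy, sinh_hexLen hz]

lemma ddd_pos {x y z : ℝ} (hx : 1 < x) (hy : 1 < y) (hz : 1 < z) : 0 < ddd x y z := by
  have hx0 : (0:ℝ) < x := lt_trans one_pos hx
  have hy0 : (0:ℝ) < y := lt_trans one_pos hy
  have hz0 : (0:ℝ) < z := lt_trans one_pos hz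
  unfold ddd
  nlinarith [mul_pos (mul_pos hx0 hy0) hz0, sq_nonneg (x-1), sq_nonneg (y-1), sq_nonneg (z-1)]

lemma one_lt_ratio {x y z : ℝ} (hx : 1 < x) (hy : 1 < y) (hz : 1 < z) :
    1 < (x + y*z) / (Real.sqrt (y^2-1) * Real.sqrt (z^2-1)) := by
  have h1 : (0:ℝ) < y^2-1 := by nlinarith
  have h2 : (0:ℝ) < z^2-1 := by nlinarith
  have hb : 0 < Real.sqrt (y^2-1) * Real.sqrt (z^2-1) := by positivity
  rw [lt_div_iff₀ hb, one_mul, ← Real.sqrt_mul h1.le]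
  have hlt : (y^2-1)*(z^2-1) < (x + y*z)^2 := by
    have hD := ddd_pos hx hy hz
    rw [ddd] at hD
    nlinarith [hD]
  have := Real.sqrt_lt_sqrt (by positivity) hlt
  rwa [Real.sqrt_sq (by nlinarith)] at this

lemma sqrt_ratio {x y z : ℝ} (hx : 1 < x) (hy : 1 < y) (hz : 1 < z) :
    Real.sqrt (((x + y*z)/(Real.sqrt (y^2-1)*Real.sqrt (z^2-1)))^2 - 1)
      = Real.sqrt (ddd x y z) / (Real.sqrt (y^2-1)*Real.sqrt (z^2-1)) := by
  have h1 : (0:ℝ) < y^2-1 := by nlinarith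
  have h2 : (0:ℝ) < z^2-1 := by nlinarith
  have hD : 0 < ddd x y z := ddd_pos hx hy hz
  have key : ((x + y*z)/(Real.sqrt (y^2-1)*Real.sqrt (z^2-1)))^2 - 1
      = (Real.sqrt (ddd x y z) / (Real.sqrt (y^2-1)*Real.sqrt (z^2-1)))^2 := by
    rw [div_pow, div_pow, mul_pow, Real.sq_sqrt h1.le, Real.sq_sqrt h2.le, Real.sq_sqrt hD.le]
    rw [ddd]
    field_simp
    ring
  rw [key, Real.sqrt_sq (by positivity)]

lemma key {A B C : ℝ × ℝ × ℝ → ℝ} {p : ℝ × ℝ × ℝ} {LA LB LC : ℝ × ℝ × ℝ →L[ℝ] ℝ}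
    (hA : HasFDerivAt A LA p) (hB : HasFDerivAt B LB p) (hC : HasFDerivAt C LC p)
    (h1 : 1 < A p) (h2 : 1 < B p) (h3 : 1 < C p) :
    HasFDerivAt (fun q => _root_.arcosh ((A q + B q * C q) /
        (Real.sqrt ((B q)^2 - 1) * Real.sqrt ((C q)^2 - 1))))
      ((Real.sqrt (ddd (A p) (B p) (C p)))⁻¹ •
        (LA - ((A p * B p + C p)/((B p)^2 - 1)) • LB
            - ((A p * C p + B p)/((C p)^2 - 1)) • LC)) p := by
  have hb1 : (0:ℝ) < (B p)^2 - 1 := by nlinarith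
  have hc1 : (0:ℝ) < (C p)^2 - 1 := by nlinarith
  have hsB : 0 < Real.sqrt ((B p)^2-1) := Real.sqrt_pos.2 hb1
  have hsC : 0 < Real.sqrt ((C p)^2-1) := Real.sqrt_pos.2 hc1
  have hsD : 0 < Real.sqrt (ddd (A p) (B p) (C p)) := Real.sqrt_pos.2 (ddd_pos h1 h2 h3)
  have eB : Real.sqrt ((B p)^2-1)^2 = (B p)^2-1 := Real.sq_sqrt hb1.le
  have eC : Real.sqrt ((C p)^2-1)^2 = (C p)^2-1 := Real.sq_sqrt hc1.le
  have hB2 : HasFDerivAt (fun q => (B q)^2 - 1) ((B p) • LB + (B p) • LB) p := by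
    have := (hB.mul hB).sub_const 1
    have hfun : (fun q => B q * B q - 1) = fun q => (B q)^2 - 1 := by
      funext q; ring
    simp only [Pi.mul_apply] at this
    rwa [hfun] at this
  have hC2 : HasFDerivAt (fun q => (C q)^2 - 1) ((C p) • LC + (C p) • LC) p := by
    have := (hC.mul hC).sub_const 1
    have hfun : (fun q => C q * C q - 1) = fun q => (C q)^2 - 1 := by
      funext q; ring
    simp only [Pi.mul_apply] at this
    rwa [hfun] at this
  have hsqB := hB2.sqrt hb1.ne'
  have hsqC := hC2.sqrt hc1.ne'
  have hE := hsqB.fun_mul hsqC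
  have hN := hA.fun_add (hB.fun_mul hC)
  have hE0 : Real.sqrt ((B p)^2-1) * Real.sqrt ((C p)^2-1) ≠ 0 := by positivity
  have hEinv := (hasDerivAt_inv hE0).comp_hasFDerivAt p hE
  have hq := hN.fun_mul hEinv
  have hval : 1 < (A p + B p * C p) * (Real.sqrt ((B p)^2-1) * Real.sqrt ((C p)^2-1))⁻¹ := by
    have := one_lt_ratio h1 h2 h3
    rwa [div_eq_mul_inv] at this
  have harc := (_root_.hasDerivAt_arcosh hval).comp_hasFDerivAt p hq
  simp only [Function.comp_def, ← div_eq_mul_inv] at harc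
  rw [sqrt_ratio h1 h2 h3] at harc
  refine harc.congr_fderiv (Eq.symm ?_)
  refine ContinuousLinearMap.ext fun x => ?_
  simp only [ContinuousLinearMap.smul_apply, ContinuousLinearMap.sub_apply,
    ContinuousLinearMap.add_apply, smul_eq_mul]
  set u := LA x with hu; set v := LB x with hv; set w := LC x with hw
  set sB := Real.sqrt ((B p)^2-1) with hsBdef; set sC := Real.sqrt ((C p)^2-1) with hsCdef
  set sD := Real.sqrt (ddd (A p) (B p) (C p)) with hsDdef
  rw [← eB, ← eC]
  field_simp
  linear_combination (-2*sC^2*(C p)*v) * eB + (-2*sB^2*(B p)*w) * eC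

lemma hasDerivAt_Af (t s : ℝ) : HasDerivAt (Af t) (2*(Af t s + 1)) s := by
  have h := (((Real.hasDerivAt_exp s).mul_const (Real.cosh (t/2))).fun_pow 2).const_mul (2:ℝ)
  have h3 := h.sub_const 1
  refine h3.congr_deriv (Eq.symm ?_)
  simp [Af]; ring

lemma isOpen_Wijk (a b c : ℝ) : IsOpen (Wijk a b c) := by
  have e : Wijk a b c
      = {p : ℝ × ℝ × ℝ | 1 < Real.exp (p.2.1 + p.2.2) * Real.cosh (a / 2)} ∩
        ({p : ℝ × ℝ × ℝ | 1 < Real.exp (p.2.2 + p.1) * Real.cosh (b / 2)} ∩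
         {p : ℝ × ℝ × ℝ | 1 < Real.exp (p.1 + p.2.1) * Real.cosh (c / 2)}) := rfl
  rw [e]
  exact (isOpen_lt continuous_const (by fun_prop)).inter
    ((isOpen_lt continuous_const (by fun_prop)).inter
     (isOpen_lt continuous_const (by fun_prop)))

set_option maxHeartbeats 4000000 in
/-- at every point `p ∈ W^{ijk}`, writing `A = cosh l_jk`, `B = cosh l_ki`,
`C = cosh l_ij` (evaluated at `p`), the Jacobian matrix
`∂(θ^i_jk, θ^j_ki, θ^k_ij)/∂(w_i, w_j, w_k)` equals
`−2/(sinh θ^k_ij · sinh l_ki · sinh l_jk)` times the symmetric matrix `M(A,B,C)`. -/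
theorem stmt_6 (a b c : ℝ) (ha : 0 < a) (hb : 0 < b) (hc : 0 < c)
    (p : ℝ × ℝ × ℝ) (hp : p ∈ Wijk a b c) :
    DifferentiableAt ℝ (thetaI a b c) p ∧
    DifferentiableAt ℝ (thetaJ a b c) p ∧
    DifferentiableAt ℝ (thetaK a b c) p ∧
    ∀ r s : Fin 3,
      Jac a b c p r s
        = -2 / (Real.sinh (thetaK a b c p) * Real.sinh (hexLen b (p.2.2 + p.1))
              * Real.sinh (hexLen a (p.2.1 + p.2.2)))
          * Mmat (Real.cosh (hexLen a (p.2.1 + p.2.2)))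
              (Real.cosh (hexLen b (p.2.2 + p.1)))
              (Real.cosh (hexLen c (p.1 + p.2.1))) r s := by
  obtain ⟨hpa, hpb, hpc⟩ := hp
  have hA1 : 1 < Af a (p.2.1+p.2.2) := one_lt_Af hpa
  have hB1 : 1 < Af b (p.2.2+p.1) := one_lt_Af hpb
  have hC1 : 1 < Af c (p.1+p.2.1) := one_lt_Af hpc
  have h21 : HasFDerivAt (fun q : ℝ×ℝ×ℝ => q.2.1)
      ((ContinuousLinearMap.fst ℝ ℝ ℝ).comp (ContinuousLinearMap.snd ℝ ℝ (ℝ×ℝ))) p :=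
    (hasFDerivAt_snd).fst
  have h22 : HasFDerivAt (fun q : ℝ×ℝ×ℝ => q.2.2)
      ((ContinuousLinearMap.snd ℝ ℝ ℝ).comp (ContinuousLinearMap.snd ℝ ℝ (ℝ×ℝ))) p :=
    (hasFDerivAt_snd).snd
  have h1f : HasFDerivAt (fun q : ℝ×ℝ×ℝ => q.1) (ContinuousLinearMap.fst ℝ ℝ (ℝ×ℝ)) p :=
    hasFDerivAt_fst
  have hA : HasFDerivAt (fun q : ℝ×ℝ×ℝ => Af a (q.2.1+q.2.2)) _ p :=
    ((hasDerivAt_Af a (p.2.1+p.2.2)).comp_hasFDerivAt p (h21.fun_add h22) :)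
  have hB : HasFDerivAt (fun q : ℝ×ℝ×ℝ => Af b (q.2.2+q.1)) _ p :=
    ((hasDerivAt_Af b (p.2.2+p.1)).comp_hasFDerivAt p (h22.fun_add h1f) :)
  have hC : HasFDerivAt (fun q : ℝ×ℝ×ℝ => Af c (q.1+q.2.1)) _ p :=
    ((hasDerivAt_Af c (p.1+p.2.1)).comp_hasFDerivAt p (h1f.fun_add h21) :)
  have hKI := key hA hB hC hA1 hB1 hC1
  have hKJ := key hB hC hA hB1 hC1 hA1
  have hKK := key hC hA hB hC1 hA1 hB1
  have hmem : Wijk a b c ∈ nhds p := (isOpen_Wijk a b c).mem_nhds ⟨hpa, hpb, hpc⟩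
  have hevI : thetaI a b c =ᶠ[nhds p] (fun q : ℝ×ℝ×ℝ =>
      _root_.arcosh ((Af a (q.2.1+q.2.2) + Af b (q.2.2+q.1) * Af c (q.1+q.2.1)) /
        (Real.sqrt ((Af b (q.2.2+q.1))^2-1) * Real.sqrt ((Af c (q.1+q.2.1))^2-1)))) :=
    Filter.eventually_of_mem hmem (fun q hq => theta_hex hq.1.le hq.2.1.le hq.2.2.le)
  have hevJ : thetaJ a b c =ᶠ[nhds p] (fun q : ℝ×ℝ×ℝ =>
      _root_.arcosh ((Af b (q.2.2+q.1) + Af c (q.1+q.2.1) * Af a (q.2.1+q.2.2)) /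
        (Real.sqrt ((Af c (q.1+q.2.1))^2-1) * Real.sqrt ((Af a (q.2.1+q.2.2))^2-1)))) :=
    Filter.eventually_of_mem hmem (fun q hq => theta_hex hq.2.1.le hq.2.2.le hq.1.le)
  have hevK : thetaK a b c =ᶠ[nhds p] (fun q : ℝ×ℝ×ℝ =>
      _root_.arcosh ((Af c (q.1+q.2.1) + Af a (q.2.1+q.2.2) * Af b (q.2.2+q.1)) /
        (Real.sqrt ((Af a (q.2.1+q.2.2))^2-1) * Real.sqrt ((Af b (q.2.2+q.1))^2-1)))) :=
    Filter.eventually_of_mem hmem (fun q hq => theta_hex hq.2.2.le hq.1.le hq.2.1.le)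
  have hdI : DifferentiableAt ℝ (thetaI a b c) p :=
    hKI.differentiableAt.congr_of_eventuallyEq hevI
  have hdJ : DifferentiableAt ℝ (thetaJ a b c) p :=
    hKJ.differentiableAt.congr_of_eventuallyEq hevJ
  have hdK : DifferentiableAt ℝ (thetaK a b c) p :=
    hKK.differentiableAt.congr_of_eventuallyEq hevK
  have hfdI := hevI.fderiv_eq.trans hKI.fderiv
  have hfdJ := hevJ.fderiv_eq.trans hKJ.fderiv
  have hfdK := hevK.fderiv_eq.trans hKK.fderiv
  have hS : Real.sinh (thetaK a b c p) * Real.sinh (hexLen b (p.2.2 + p.1))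
      * Real.sinh (hexLen a (p.2.1 + p.2.2))
      = Real.sqrt (ddd (Af a (p.2.1+p.2.2)) (Af b (p.2.2+p.1)) (Af c (p.1+p.2.1))) := by
    have hsA : 0 < Real.sqrt ((Af a (p.2.1+p.2.2))^2-1) := Real.sqrt_pos.2 (by nlinarith)
    have hsB : 0 < Real.sqrt ((Af b (p.2.2+p.1))^2-1) := Real.sqrt_pos.2 (by nlinarith)
    have hrat := one_lt_ratio hC1 hA1 hB1
    unfold thetaK
    rw [theta_hex hpc.le hpa.le hpb.le, _root_.sinh_arcosh hrat.le, sqrt_ratio hC1 hA1 hB1,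
      sinh_hexLen hpb.le, sinh_hexLen hpa.le,
      show ddd (Af c (p.1+p.2.1)) (Af a (p.2.1+p.2.2)) (Af b (p.2.2+p.1))
        = ddd (Af a (p.2.1+p.2.2)) (Af b (p.2.2+p.1)) (Af c (p.1+p.2.1)) from by unfold ddd; ring]
    field_simp
  refine ⟨hdI, hdJ, hdK, ?_⟩
  intro r s
  have hApos : (0:ℝ) < Af a (p.2.1+p.2.2) - 1 := by linarith
  have hBpos : (0:ℝ) < Af b (p.2.2+p.1) - 1 := by linarith
  have hCpos : (0:ℝ) < Af c (p.1+p.2.1) - 1 := by linarith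
  have hA2 : (0:ℝ) < (Af a (p.2.1+p.2.2))^2-1 := by nlinarith
  have hB2 : (0:ℝ) < (Af b (p.2.2+p.1))^2-1 := by nlinarith
  have hC2 : (0:ℝ) < (Af c (p.1+p.2.1))^2-1 := by nlinarith
  have hsD : 0 < Real.sqrt (ddd (Af a (p.2.1+p.2.2)) (Af b (p.2.2+p.1)) (Af c (p.1+p.2.1))) :=
    Real.sqrt_pos.2 (ddd_pos hA1 hB1 hC1)
  have hpermJ : ddd (Af b (p.2.2+p.1)) (Af c (p.1+p.2.1)) (Af a (p.2.1+p.2.2))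
      = ddd (Af a (p.2.1+p.2.2)) (Af b (p.2.2+p.1)) (Af c (p.1+p.2.1)) := by unfold ddd; ring
  have hpermK : ddd (Af c (p.1+p.2.1)) (Af a (p.2.1+p.2.2)) (Af b (p.2.2+p.1))
      = ddd (Af a (p.2.1+p.2.2)) (Af b (p.2.2+p.1)) (Af c (p.1+p.2.1)) := by unfold ddd; ring
  fin_cases r <;> fin_cases s <;>
  · simp only [Jac, Fin.isValue, Fin.zero_eta, Fin.mk_one,
      show (⟨2, by norm_num⟩ : Fin 3) = 2 from rfl,
      Matrix.cons_val_zero, Matrix.cons_val_one, Matrix.head_cons,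
      Matrix.cons_val_two, Matrix.tail_cons]
    first
      | rw [hfdI] | rw [hfdJ] | rw [hfdK]
    rw [hS, cosh_hexLen hpa.le, cosh_hexLen hpb.le, cosh_hexLen hpc.le]
    simp only [Mmat, Matrix.of_apply, Matrix.cons_val', Matrix.cons_val_zero,
      Matrix.cons_val_one, Matrix.head_cons, Matrix.empty_val', Matrix.cons_val_fin_one,
      Matrix.head_fin_const, Matrix.cons_val_two, Matrix.tail_cons,
      ContinuousLinearMap.smul_apply, ContinuousLinearMap.sub_apply,
      ContinuousLinearMap.add_apply, ContinuousLinearMap.coe_comp', Function.comp_apply,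
      ContinuousLinearMap.coe_fst', ContinuousLinearMap.coe_snd', smul_eq_mul]
    first
      | rw [hpermJ] | rw [hpermK] | skip
    field_simp
    ring
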